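/- arXiv:1806.09302 — 3 statements merged into one kernel-verified Lean document; each statement's English description precedes it below -/
import Mathlib

section
/- Let d be a positive integer, let ω : [0,∞) → ℝ^d be right-continuous at every t ≥ 0, let O ⊆ ℝ^d be a bounded open set, and let h be a real number with 0 ≤ h ≤ τ_O(ω). Then the exit time of the shifted path from the closure of O satisfies τ_{cl(O)}(θ_h ω) = τ_{cl(O)}(ω) − h (an identity in [0,∞], where ∞ − h = ∞; note τ_{cl(O)}(ω) ≥ τ_O(ω) ≥ h so the subtraction is well defined). -/
open scoped NNReal ENNReal

/-- Exit time of a path `ω : [0,∞) → E` from a set `B`: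
`τ_B(ω) = inf {t > 0 : ω t ∉ B}`, valued in `[0,∞]` with `inf ∅ = ∞`. -/
noncomputable def exitTime {E : Type*} (B : Set E) (ω : ℝ≥0 → E) : ℝ≥0∞ :=
  sInf ((fun t : ℝ≥0 => (t : ℝ≥0∞)) '' {t : ℝ≥0 | 0 < t ∧ ω t ∉ B})

/-- Proposition 3.5: if `0 ≤ h ≤ τ_O(ω)`, then the exit time of the shifted path
`θ_h ω` from the closure of `O` satisfies `τ_{cl O}(θ_h ω) = τ_{cl O}(ω) - h`. -/
theorem exitTime_closure_shift (d : ℕ) (hd : 0 < d)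
    (ω : ℝ≥0 → EuclideanSpace ℝ (Fin d))
    (hrc : ∀ t : ℝ≥0, ContinuousWithinAt ω (Set.Ici t) t)
    (O : Set (EuclideanSpace ℝ (Fin d))) (hO : IsOpen O)
    (hObdd : Bornology.IsBounded O)
    (h : ℝ≥0) (hh : (h : ℝ≥0∞) ≤ exitTime O ω) :
    exitTime (closure O) (fun s => ω (h + s)) = exitTime (closure O) ω - (h : ℝ≥0∞) := by
  set τ := exitTime (closure O) ω with hτ
  set σ := exitTime (closure O) (fun s => ω (h + s)) with hσ
  -- h ≤ τ
  have hOle : exitTime O ω ≤ τ := by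
    apply sInf_le_sInf
    apply Set.image_mono
    rintro t ⟨ht0, htn⟩
    exact ⟨ht0, fun hmem => htn (subset_closure hmem)⟩
  have hhτ : (h : ℝ≥0∞) ≤ τ := le_trans hh hOle
  refine le_antisymm ?_ ?_
  · -- σ ≤ τ - h, i.e. h + σ ≤ τ
    rw [ENNReal.cancel_coe.le_tsub_iff_left hhτ]
    refine le_sInf ?_
    rintro x ⟨t, ⟨ht0, htn⟩, rfl⟩
    dsimp only
    -- h ≤ t, since ω t ∉ O
    have hht : h ≤ t := by
      have : exitTime O ω ≤ (t : ℝ≥0∞) :=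
        sInf_le ⟨t, ⟨ht0, fun hmem => htn (subset_closure hmem)⟩, rfl⟩
      exact_mod_cast le_trans hh this
    rw [← ENNReal.cancel_coe.le_tsub_iff_left (ENNReal.coe_le_coe.2 hht)]
    rcases lt_or_eq_of_le hht with hlt | heq
    · -- h < t : witness s = t - h
      have hs0 : 0 < t - h := tsub_pos_of_lt hlt
      have hmem : ω (h + (t - h)) ∉ closure O := by
        rwa [add_tsub_cancel_of_le hht]
      calc σ ≤ ((t - h : ℝ≥0) : ℝ≥0∞) := sInf_le ⟨t - h, ⟨hs0, hmem⟩, rfl⟩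
        _ = (t : ℝ≥0∞) - h := ENNReal.coe_sub
    · -- h = t : right-continuity gives σ = 0
      have hzero : σ = 0 := by
        refine le_antisymm ?_ zero_le
        refine ENNReal.le_of_forall_pos_le_add fun ε hε _ => ?_
        rw [zero_add]
        -- ω h ∉ closure O; use right continuity
        have hωh : ω h ∉ closure O := heq ▸ htn
        have hopen : IsOpen (closure O)ᶜ := (isClosed_closure).isOpen_compl
        have hev : ∀ᶠ u in nhdsWithin h (Set.Ici h), ω u ∈ (closure O)ᶜ :=
          (hrc h).eventually_mem (hopen.mem_nhds hωh)
        have htend : Filter.Tendsto (fun s : ℝ≥0 => h + s) (nhdsWithin 0 (Set.Ioi 0))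
            (nhdsWithin h (Set.Ici h)) := by
          rw [tendsto_nhdsWithin_iff]
          constructor
          · have : Filter.Tendsto (fun s : ℝ≥0 => h + s) (nhds 0) (nhds h) := by
              simpa using (continuous_add_left h).tendsto 0
            exact this.mono_left nhdsWithin_le_nhds
          · filter_upwards [eventually_mem_nhdsWithin] with s hs
            exact le_add_of_nonneg_right (le_of_lt (Set.mem_Ioi.mp hs))
        have hev2 : ∀ᶠ s in nhdsWithin 0 (Set.Ioi (0 : ℝ≥0)), ω (h + s) ∈ (closure O)ᶜ :=
          htend.eventually hev
        have hev3 : ∀ᶠ s in nhdsWithin 0 (Set.Ioi (0 : ℝ≥0)), s < ε := by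
          have : Set.Iio ε ∈ nhds (0 : ℝ≥0) := Iio_mem_nhds hε
          exact Filter.Eventually.filter_mono nhdsWithin_le_nhds this
        obtain ⟨s, ⟨hs1, hs2⟩, hs3⟩ :=
          ((hev2.and hev3).and eventually_mem_nhdsWithin).exists
        calc σ ≤ (s : ℝ≥0∞) := sInf_le ⟨s, ⟨hs3, hs1⟩, rfl⟩
          _ ≤ (ε : ℝ≥0∞) := by exact_mod_cast le_of_lt hs2
      rw [hzero]
      exact zero_le
  · -- τ - h ≤ σ
    refine le_sInf ?_
    rintro x ⟨s, ⟨hs0, hsn⟩, rfl⟩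
    dsimp only
    rw [tsub_le_iff_left]
    refine sInf_le ⟨h + s, ⟨?_, hsn⟩, by push_cast; ring⟩
    positivity
end

section
/- Let d be a positive integer, let ω : [0,∞) → ℝ^d be càdlàg, let O ⊆ ℝ^d be open, and suppose 0 < τ⁻_O(ω) < ∞; write ζ⁻ := τ⁻_O(ω). If either (i) ω⁻(ζ⁻) ∈ O, or (ii) ω(ζ⁻) = ω⁻(ζ⁻), then ω(ζ⁻) ∉ O, and consequently τ_O(ω) ≤ ζ⁻. -/
open scoped NNReal ENNReal

/-- `ωm` is the left-limit path `ω⁻` of `ω`: `ω⁻(0) = ω(0)` and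
`ω⁻(t) = lim_{s↑t} ω(s)` for `t > 0`. -/
def IsLeftLimitPath {E : Type*} [TopologicalSpace E] (ω ωm : ℝ≥0 → E) : Prop :=
  ωm 0 = ω 0 ∧
    ∀ t : ℝ≥0, 0 < t → Filter.Tendsto ω (nhdsWithin t (Set.Iio t)) (nhds (ωm t))

/-- Deterministic core of Proposition 3.4: for a càdlàg path `ω` and an open set `O`,
with `ζ⁻ := τ⁻_O(ω) ∈ (0,∞)`, if either `ω⁻(ζ⁻) ∈ O` or `ω(ζ⁻) = ω⁻(ζ⁻)`,
then `ω(ζ⁻) ∉ O` and hence `τ_O(ω) ≤ ζ⁻`. -/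
theorem exitTime_le_leftLimit_exitTime (d : ℕ) (hd : 0 < d)
    (ω ωm : ℝ≥0 → EuclideanSpace ℝ (Fin d))
    (hrc : ∀ t : ℝ≥0, ContinuousWithinAt ω (Set.Ici t) t)
    (hll : IsLeftLimitPath ω ωm)
    (O : Set (EuclideanSpace ℝ (Fin d))) (hO : IsOpen O)
    (ζ : ℝ≥0) (hζpos : 0 < ζ) (hζ : (ζ : ℝ≥0∞) = exitTime O ωm)
    (hcase : ωm ζ ∈ O ∨ ω ζ = ωm ζ) :
    ω ζ ∉ O ∧ exitTime O ω ≤ (ζ : ℝ≥0∞) := by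
  have hmain : ω ζ ∉ O := by
    by_cases hmζ : ωm ζ ∈ O
    · intro hωζ
      obtain ⟨r, hr, hball⟩ := Metric.isOpen_iff.1 hO (ω ζ) hωζ
      have hb : ω ⁻¹' Metric.ball (ω ζ) (r/2) ∈ nhdsWithin ζ (Set.Ici ζ) :=
        hrc ζ (Metric.ball_mem_nhds _ (by positivity))
      obtain ⟨u, hu, hIco⟩ := mem_nhdsGE_iff_exists_Ico_subset.1 hb
      have hlt : exitTime O ωm < (u : ℝ≥0∞) := by
        rw [← hζ]; exact_mod_cast hu
      obtain ⟨x, hx, hxu⟩ := sInf_lt_iff.1 hlt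
      obtain ⟨t, htS, rfl⟩ := hx
      have htu : t < u := ENNReal.coe_lt_coe.mp hxu
      have hζt : ζ < t := by
        rcases lt_or_eq_of_le (show ζ ≤ t by
          have : (ζ : ℝ≥0∞) ≤ (t : ℝ≥0∞) := hζ ▸ sInf_le ⟨t, htS, rfl⟩
          exact_mod_cast this) with h | h
        · exact h
        · exact absurd (h ▸ htS.2) (not_not_intro hmζ)
      haveI : (nhdsWithin t (Set.Iio t)).NeBot := nhdsWithin_Iio_self_neBot' ⟨ζ, hζt⟩
      have hev : ∀ᶠ s in nhdsWithin t (Set.Iio t),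
          ω s ∈ Metric.closedBall (ω ζ) (r/2) := by
        filter_upwards [Ioo_mem_nhdsLT_of_mem (⟨hζt, le_refl t⟩ : t ∈ Set.Ioc ζ t)]
          with s hs
        exact Metric.ball_subset_closedBall (hIco ⟨hs.1.le, hs.2.trans htu⟩)
      have hcb : ωm t ∈ Metric.closedBall (ω ζ) (r/2) :=
        Metric.isClosed_closedBall.mem_of_tendsto (hll.2 t (hζpos.trans hζt)) hev
      exact htS.2 (hball (Metric.closedBall_subset_ball (by linarith) hcb))
    · rcases hcase with h | h
      · exact absurd h hmζ
      · rw [h]; exact hmζ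
  exact ⟨hmain, sInf_le ⟨ζ, ⟨hζpos, hmain⟩, rfl⟩⟩
end

section
/- For x = (x₁,x₂) ∈ [−1,1]×[0,1], let ζ(x) := inf{t > 0 : (x₁ + t, x₂ − x₁² + (x₁+t)²) ∉ [−1,1]×[0,1]}. Then for every a ∈ (−1,0), the function ζ is discontinuous at the point (a, a²): indeed ζ(a, a²) = 1 − a, while ζ(a, a² − δ) = −a − √δ for every δ with 0 < δ ≤ a², so ζ(a, a² − δ) → −a ≠ 1 − a as δ ↓ 0. -/
open scoped NNReal ENNReal

/-- The exit time `ζ(x) = inf {t > 0 : (x₁ + t, x₂ - x₁² + (x₁+t)²) ∉ [-1,1] × [0,1]}`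
of Example 3.3. -/
noncomputable def zetaEx (x₁ x₂ : ℝ) : ℝ≥0∞ :=
  exitTime (Set.Icc (-1 : ℝ) 1 ×ˢ Set.Icc (0 : ℝ) 1)
    (fun t : ℝ≥0 => (x₁ + (t : ℝ), x₂ - x₁ ^ 2 + (x₁ + (t : ℝ)) ^ 2))

lemma sInf_image_coe_eq {S : Set ℝ≥0} {c : ℝ} (hc : 0 ≤ c)
    (h1 : ∀ t ∈ S, c ≤ (t : ℝ))
    (h2 : ∀ ε : ℝ, 0 < ε → ∃ t ∈ S, (t : ℝ) < c + ε) :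
    sInf ((fun t : ℝ≥0 => (t : ℝ≥0∞)) '' S) = ENNReal.ofReal c := by
  apply le_antisymm
  · apply ENNReal.le_of_forall_pos_le_add
    intro ε hε _
    obtain ⟨t, htS, ht⟩ := h2 ε hε
    calc sInf ((fun t : ℝ≥0 => (t : ℝ≥0∞)) '' S) ≤ (t : ℝ≥0∞) :=
          sInf_le ⟨t, htS, rfl⟩
      _ = ENNReal.ofReal (t : ℝ) := ENNReal.ofReal_coe_nnreal.symm
      _ ≤ ENNReal.ofReal (c + ε) := ENNReal.ofReal_le_ofReal ht.le
      _ = ENNReal.ofReal c + ENNReal.ofReal ε := ENNReal.ofReal_add hc ε.coe_nonneg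
      _ = ENNReal.ofReal c + ε := by rw [ENNReal.ofReal_coe_nnreal]
  · apply le_sInf
    rintro b ⟨t, htS, rfl⟩
    calc ENNReal.ofReal c ≤ ENNReal.ofReal (t : ℝ) := ENNReal.ofReal_le_ofReal (h1 t htS)
      _ = (t : ℝ≥0∞) := ENNReal.ofReal_coe_nnreal

/-- Example 3.3 (discontinuity claim): for every `a ∈ (-1,0)`, the exit-time map
`ζ` is discontinuous at `(a, a²)`: indeed `ζ(a, a²) = 1 - a` while
`ζ(a, a² - δ) = -a - √δ` for `0 < δ ≤ a²`, so `ζ(a, a² - δ) → -a ≠ 1 - a` as `δ ↓ 0`. -/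
theorem zeta_discontinuous_on_curve (a : ℝ) (ha : a ∈ Set.Ioo (-1 : ℝ) 0) :
    zetaEx a (a ^ 2) = ENNReal.ofReal (1 - a) ∧
    (∀ δ : ℝ, 0 < δ → δ ≤ a ^ 2 →
      zetaEx a (a ^ 2 - δ) = ENNReal.ofReal (-a - Real.sqrt δ)) ∧
    Filter.Tendsto (fun δ : ℝ => zetaEx a (a ^ 2 - δ))
      (nhdsWithin 0 (Set.Ioi 0)) (nhds (ENNReal.ofReal (-a))) ∧
    ENNReal.ofReal (-a) ≠ ENNReal.ofReal (1 - a) := by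
  obtain ⟨ha1, ha2⟩ := ha
  have key2 : ∀ δ : ℝ, 0 < δ → δ ≤ a ^ 2 →
      zetaEx a (a ^ 2 - δ) = ENNReal.ofReal (-a - Real.sqrt δ) := by
    intro δ hδ hδa
    have hsq : Real.sqrt δ ^ 2 = δ := Real.sq_sqrt hδ.le
    have hsqpos : 0 < Real.sqrt δ := Real.sqrt_pos.mpr hδ
    have hsle : Real.sqrt δ ≤ -a := by
      have := Real.sqrt_le_sqrt hδa
      rwa [Real.sqrt_sq_eq_abs, abs_of_neg ha2] at this
    have hc : 0 ≤ -a - Real.sqrt δ := by linarith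
    simp only [zetaEx, exitTime]
    apply sInf_image_coe_eq hc
    · rintro t ⟨ht0, htout⟩
      by_contra hlt
      push_neg at hlt
      apply htout
      have ht0' : (0:ℝ) < t := ht0
      constructor <;> constructor <;> dsimp only <;> nlinarith
    · intro ε hε
      set m := min (ε / 2) (Real.sqrt δ) with hm
      have hmpos : 0 < m := lt_min (by linarith) hsqpos
      have hmle : m ≤ Real.sqrt δ := min_le_right _ _
      have hmle2 : m ≤ ε / 2 := min_le_left _ _
      refine ⟨Real.toNNReal (-a - Real.sqrt δ + m), ⟨?_, ?_⟩, ?_⟩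
      · exact Real.toNNReal_pos.mpr (by linarith)
      · intro hmem
        have hco : ((Real.toNNReal (-a - Real.sqrt δ + m) : ℝ≥0) : ℝ)
            = -a - Real.sqrt δ + m := Real.coe_toNNReal _ (by linarith)
        have := hmem.2
        simp only [hco, Set.mem_Icc] at this
        nlinarith [this.1]
      · rw [Real.coe_toNNReal _ (by linarith)]
        linarith
  refine ⟨?_, key2, ?_, ?_⟩
  · simp only [zetaEx, exitTime]
    apply sInf_image_coe_eq (by linarith)
    · rintro t ⟨ht0, htout⟩
      by_contra hlt
      push_neg at hlt
      apply htout
      have ht0' : (0:ℝ) < t := ht0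
      constructor <;> constructor <;> dsimp only <;> nlinarith
    · intro ε hε
      refine ⟨Real.toNNReal (1 - a + ε / 2), ⟨?_, ?_⟩, ?_⟩
      · exact Real.toNNReal_pos.mpr (by linarith)
      · intro hmem
        have hco : ((Real.toNNReal (1 - a + ε / 2) : ℝ≥0) : ℝ)
            = 1 - a + ε / 2 := Real.coe_toNNReal _ (by linarith)
        have := hmem.1
        simp only [hco, Set.mem_Icc] at this
        linarith [this.2]
      · rw [Real.coe_toNNReal _ (by linarith)]
        linarith
  · have ha2' : 0 < a ^ 2 := by nlinarith
    have hev : ∀ᶠ δ : ℝ in nhdsWithin 0 (Set.Ioi 0),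
        ENNReal.ofReal (-a - Real.sqrt δ) = zetaEx a (a ^ 2 - δ) := by
      filter_upwards [Ioo_mem_nhdsGT_of_mem (Set.mem_Ico.mpr ⟨le_refl 0, ha2'⟩)] with δ hδ
      exact (key2 δ hδ.1 hδ.2.le).symm
    apply Filter.Tendsto.congr' hev
    have h1 : Filter.Tendsto (fun δ : ℝ => -a - Real.sqrt δ)
        (nhdsWithin 0 (Set.Ioi 0)) (nhds (-a)) := by
      have : Continuous (fun δ : ℝ => -a - Real.sqrt δ) :=
        continuous_const.sub Real.continuous_sqrt
      have h := (this.tendsto 0).mono_left (nhdsWithin_le_nhds (s := Set.Ioi 0))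
      simpa using h
    exact (ENNReal.continuous_ofReal.tendsto _).comp h1
  · have : ENNReal.ofReal (-a) < ENNReal.ofReal (1 - a) :=
      (ENNReal.ofReal_lt_ofReal_iff (by linarith)).mpr (by linarith)
    exact this.ne
end
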